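/- Let r ∈ C²((0,1]) ∩ C([0,1]) with r'(R) > 0 on (0,1] be a solution of the radial equilibrium equation with r(0) > 0, and assume δ(R) = r'(R)(r(R)/R)^{n−1} is bounded on (0,1]. Then r''(R) ≥ 0 for all R ∈ (0,1], i.e. r is convex. -/

import Mathlib

open Real MeasureTheory Filter Set
open scoped ENNReal NNReal

noncomputable section

/-- Radial stored energy `Φ(q, v, …, v) = (κ/n)(qⁿ + (n−1)vⁿ) + h(q v^{n−1})`,
the restriction of `Φ(v₁,…,vₙ) = (κ/n)(v₁ⁿ+⋯+vₙⁿ) + h(v₁⋯vₙ)` to points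
`(q, v, …, v)`. -/
def Phi (n : ℕ) (κ : ℝ) (h : ℝ → ℝ) (q v : ℝ) : ℝ :=
  (κ / n) * (q ^ n + ((n : ℝ) - 1) * v ^ n) + h (q * v ^ (n - 1))

/-- `Φ_{,1}(q, v, …, v) = κ q^{n−1} + v^{n−1} h'(q v^{n−1})`. -/
def Phi1 (n : ℕ) (κ : ℝ) (h' : ℝ → ℝ) (q v : ℝ) : ℝ :=
  κ * q ^ (n - 1) + v ^ (n - 1) * h' (q * v ^ (n - 1))

/-- `Φ_{,2}(q, v, …, v) = κ v^{n−1} + q v^{n−2} h'(q v^{n−1})`. -/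
def Phi2 (n : ℕ) (κ : ℝ) (h' : ℝ → ℝ) (q v : ℝ) : ℝ :=
  κ * v ^ (n - 1) + q * v ^ (n - 2) * h' (q * v ^ (n - 1))

/-- Radial Cauchy stress `T(q,v) = v^{1−n} Φ_{,1}(q,v,…,v) = κ(q/v)^{n−1} + h'(q v^{n−1})`. -/
def Tstress (n : ℕ) (κ : ℝ) (h' : ℝ → ℝ) (q v : ℝ) : ℝ :=
  κ * (q / v) ^ (n - 1) + h' (q * v ^ (n - 1))

/-- The determinant function `δ(R) = r'(R) (r(R)/R)^{n−1}`. -/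
def del (n : ℕ) (r r' : ℝ → ℝ) (R : ℝ) : ℝ :=
  r' R * (r R / R) ^ (n - 1)

/-- Hypotheses on `h : (0,∞) → [0,∞)`: it is `C²` with derivative `h'` and second
derivative `h''`, `h'' > 0`, `h(d) → ∞` as `d → 0⁺`, `h(d)/d → ∞` as `d → ∞`,
`h'(d) → −∞` as `d → 0⁺` and `h'(d) → ∞` as `d → ∞`. -/
structure GoodH (h h' h'' : ℝ → ℝ) : Prop where
  nonneg : ∀ d : ℝ, 0 < d → 0 ≤ h d
  deriv1 : ∀ d : ℝ, 0 < d → HasDerivAt h (h' d) d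
  deriv2 : ∀ d : ℝ, 0 < d → HasDerivAt h' (h'' d) d
  cont2 : ContinuousOn h'' (Set.Ioi 0)
  hpp_pos : ∀ d : ℝ, 0 < d → 0 < h'' d
  lim_zero : Tendsto h (nhdsWithin 0 (Set.Ioi 0)) atTop
  lim_growth : Tendsto (fun d => h d / d) atTop atTop
  dlim_zero : Tendsto h' (nhdsWithin 0 (Set.Ioi 0)) atBot
  dlim_top : Tendsto h' atTop atTop

/-- `r ∈ C²((0,1])`, with `r, r' > 0` on `(0,1]`, solving the radial equilibrium
equation `(d/dR)[R^{n−1} Φ_{,1}(r(R))] = (n−1) R^{n−2} Φ_{,2}(r(R))`. -/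
structure RadialSol (n : ℕ) (κ : ℝ) (h' : ℝ → ℝ) (r r' r'' : ℝ → ℝ) : Prop where
  pos : ∀ R ∈ Set.Ioc (0:ℝ) 1, 0 < r R
  derivPos : ∀ R ∈ Set.Ioc (0:ℝ) 1, 0 < r' R
  hasDeriv : ∀ R ∈ Set.Ioc (0:ℝ) 1, HasDerivWithinAt r (r' R) (Set.Ioc 0 1) R
  hasDeriv2 : ∀ R ∈ Set.Ioc (0:ℝ) 1, HasDerivWithinAt r' (r'' R) (Set.Ioc 0 1) R
  cont2 : ContinuousOn r'' (Set.Ioc 0 1)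
  equil : ∀ R ∈ Set.Ioc (0:ℝ) 1,
    HasDerivWithinAt (fun s => s ^ (n - 1) * Phi1 n κ h' (r' s) (r s / s))
      (((n : ℝ) - 1) * R ^ (n - 2) * Phi2 n κ h' (r' R) (r R / R)) (Set.Ioc 0 1) R


open scoped Topology

lemma vel_hasDeriv {r r' : ℝ → ℝ} {R : ℝ} (hR : R ∈ Set.Ioc (0:ℝ) 1)
    (h0 : HasDerivWithinAt r (r' R) (Set.Ioc 0 1) R) :
    HasDerivWithinAt (fun s => r s / s) ((r' R - r R / R) / R) (Set.Ioc 0 1) R := by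
  have hne : R ≠ 0 := ne_of_gt hR.1
  have := h0.fun_div (hasDerivWithinAt_id R (Set.Ioc 0 1)) hne
  refine this.congr_deriv (Eq.symm ?_)
  simp only [id_eq, mul_one]
  rw [div_eq_div_iff hne (pow_ne_zero 2 hne)]
  field_simp

lemma key_identity (n : ℕ) (hn : 2 ≤ n) (κ : ℝ) (h' h'' : ℝ → ℝ)
    (hd2 : ∀ d : ℝ, 0 < d → HasDerivAt h' (h'' d) d)
    (r r' r'' : ℝ → ℝ) (hr : RadialSol n κ h' r r' r'')
    {R : ℝ} (hR : R ∈ Set.Ioc (0:ℝ) 1) :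
    (R * (κ * ((n:ℝ) - 1) * (r' R) ^ (n - 2)
        + (r R / R) ^ (2 * n - 2) * h'' (r' R * (r R / R) ^ (n - 1)))) * r'' R
      = ((n:ℝ) - 1) * (κ * ((r R / R) ^ (n - 1) - (r' R) ^ (n - 1))
          + (r R / R - r' R) * r' R * (r R / R) ^ (2 * n - 3)
            * h'' (r' R * (r R / R) ^ (n - 1))) := by
  obtain ⟨m, rfl⟩ : ∃ m, n = m + 2 := ⟨n - 2, by omega⟩
  have hRpos := hR.1
  have hRne : R ≠ 0 := ne_of_gt hRpos
  have hq : 0 < r' R := hr.derivPos R hR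
  have hv : 0 < r R / R := div_pos (hr.pos R hR) hRpos
  have hd : 0 < r' R * (r R / R) ^ (m + 1) := by positivity
  have Hh' := hd2 _ hd
  have h0 := hr.hasDeriv R hR
  have h1 := hr.hasDeriv2 R hR
  have hvd := vel_hasDeriv hR h0
  have hpowv : HasDerivWithinAt (fun s => (r s / s) ^ (m + 1))
      (((m:ℝ) + 1) * (r R / R) ^ m * ((r' R - r R / R) / R)) (Set.Ioc 0 1) R := by
    have := hvd.fun_pow (m + 1); push_cast at this ⊢; simpa using this
  have hinner : HasDerivWithinAt (fun s => r' s * (r s / s) ^ (m + 1))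
      (r'' R * (r R / R) ^ (m + 1)
        + r' R * (((m:ℝ) + 1) * (r R / R) ^ m * ((r' R - r R / R) / R)))
      (Set.Ioc 0 1) R := h1.mul hpowv
  have hcomp : HasDerivWithinAt (fun s => h' (r' s * (r s / s) ^ (m + 1)))
      (h'' (r' R * (r R / R) ^ (m + 1)) * (r'' R * (r R / R) ^ (m + 1)
        + r' R * (((m:ℝ) + 1) * (r R / R) ^ m * ((r' R - r R / R) / R))))
      (Set.Ioc 0 1) R := by
    have := Hh'.comp_hasDerivWithinAt R hinner
    simpa [Function.comp_def] using this
  have hqpow : HasDerivWithinAt (fun s => (r' s) ^ (m + 1))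
      (((m:ℝ) + 1) * (r' R) ^ m * r'' R) (Set.Ioc 0 1) R := by
    have := h1.fun_pow (m + 1); push_cast at this ⊢; simpa using this
  have hP : HasDerivWithinAt (fun s => Phi1 (m + 2) κ h' (r' s) (r s / s))
      (κ * (((m:ℝ) + 1) * (r' R) ^ m * r'' R)
        + ((((m:ℝ) + 1) * (r R / R) ^ m * ((r' R - r R / R) / R))
            * h' (r' R * (r R / R) ^ (m + 1))
          + (r R / R) ^ (m + 1) * (h'' (r' R * (r R / R) ^ (m + 1))
            * (r'' R * (r R / R) ^ (m + 1)
              + r' R * (((m:ℝ) + 1) * (r R / R) ^ m * ((r' R - r R / R) / R))))))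
      (Set.Ioc 0 1) R := by
    simp only [Phi1, show m + 2 - 1 = m + 1 from rfl]
    exact (hqpow.const_mul κ).add (hpowv.mul hcomp)
  have hRpow : HasDerivWithinAt (fun s : ℝ => s ^ (m + 1)) (((m:ℝ) + 1) * R ^ m)
      (Set.Ioc 0 1) R := by
    have := (hasDerivWithinAt_id R (Set.Ioc 0 1)).fun_pow (m + 1)
    push_cast at this ⊢; simpa using this
  have hg := hRpow.mul hP
  have hU := uniqueDiffOn_Ioc (0:ℝ) 1 R hR
  have E := (hg.derivWithin hU).symm.trans ((hr.equil R hR).derivWithin hU)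
  simp only [Phi2, show m + 2 - 1 = m + 1 from rfl, show m + 2 - 2 = m from rfl] at E
  push_cast at E
  simp only [Phi1, show m + 2 - 1 = m + 1 from rfl] at E
  set V := r R / R with hV
  set Q := r' R with hQ
  set W := r'' R with hW
  set a := h' (Q * V ^ (m+1)) with ha
  set b := h'' (Q * V ^ (m+1)) with hb
  simp only [show m + 2 - 2 = m from rfl, show 2*(m+2) - 2 = 2*m+2 by omega,
    show 2*(m+2) - 3 = 2*m+1 by omega, show m + 2 - 1 = m + 1 from rfl]
  push_cast
  field_simp at E
  apply mul_left_cancel₀ (pow_ne_zero (m+1) hRne)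
  linear_combination E

lemma near_zero (n : ℕ) (hn : 2 ≤ n) (κ : ℝ) (h' : ℝ → ℝ)
    (r r' r'' : ℝ → ℝ) (hr : RadialSol n κ h' r r' r'')
    (hcont : ContinuousOn r (Set.Icc 0 1)) (hcav : 0 < r 0)
    (M : ℝ) (hM : ∀ R ∈ Set.Ioc (0:ℝ) 1, del n r r' R ≤ M) :
    ∃ ε : ℝ, ε ∈ Set.Ioc (0:ℝ) 1 ∧ ∀ R ∈ Set.Ioc (0:ℝ) ε, r' R < r R / R := by
  have h1 : Tendsto r (𝓝[Set.Ioc 0 1] 0) (𝓝 (r 0)) :=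
    (hcont.continuousWithinAt ⟨le_refl 0, zero_le_one⟩).mono_left
      (nhdsWithin_mono 0 Set.Ioc_subset_Icc_self)
  have h2 : Tendsto (fun R : ℝ => R⁻¹) (𝓝[Set.Ioc 0 1] 0) atTop :=
    tendsto_inv_nhdsGT_zero.mono_left (nhdsWithin_mono 0 (fun x hx => hx.1))
  have h3 : Tendsto (fun R => r R / R) (𝓝[Set.Ioc 0 1] 0) atTop := by
    simp only [div_eq_mul_inv]
    exact Filter.Tendsto.pos_mul_atTop hcav h1 h2
  have h4 : ∀ᶠ R in 𝓝[Set.Ioc 0 1] 0, max 1 |M| < r R / R :=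
    h3.eventually (eventually_gt_atTop _)
  obtain ⟨εd, hεd, hball⟩ := Metric.mem_nhdsWithin_iff.mp h4
  refine ⟨min (εd/2) 1, ⟨lt_min (by linarith) one_pos, min_le_right _ _⟩, ?_⟩
  intro R hRR
  have hR1 : R ∈ Set.Ioc (0:ℝ) 1 := ⟨hRR.1, hRR.2.trans (min_le_right _ _)⟩
  have hball' : R ∈ Metric.ball 0 εd := by
    rw [Metric.mem_ball, Real.dist_eq, sub_zero, abs_of_pos hRR.1]
    have := hRR.2.trans (min_le_left _ _)
    linarith
  have hgt : max 1 |M| < r R / R := hball ⟨hball', hR1⟩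
  have hv1 : (1:ℝ) < r R / R := lt_of_le_of_lt (le_max_left _ _) hgt
  have hvM : |M| < r R / R := lt_of_le_of_lt (le_max_right _ _) hgt
  have hd := hM R hR1
  simp only [del] at hd
  have hvpow : (1:ℝ) ≤ (r R / R) ^ (n - 1) := by
    calc (1:ℝ) = 1 ^ (n - 1) := (one_pow _).symm
      _ ≤ (r R / R) ^ (n - 1) := pow_le_pow_left₀ zero_le_one hv1.le _
  have hkey : r' R * (r R / R) ^ (n - 1) < (r R / R) * (r R / R) ^ (n - 1) := by
    calc r' R * (r R / R) ^ (n - 1) ≤ M := hd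
      _ ≤ |M| := le_abs_self M
      _ < r R / R := hvM
      _ ≤ (r R / R) * (r R / R) ^ (n - 1) := le_mul_of_one_le_right (by linarith) hvpow
  exact lt_of_mul_lt_mul_right hkey (by positivity)

lemma rpp_sign (n : ℕ) (hn : 2 ≤ n) (κ : ℝ) (hκ : 0 < κ)
    (h h' h'' : ℝ → ℝ) (hh : GoodH h h' h'')
    (r r' r'' : ℝ → ℝ) (hr : RadialSol n κ h' r r' r'')
    {R : ℝ} (hR : R ∈ Set.Ioc (0:ℝ) 1) :
    (r R / R < r' R → r'' R < 0) ∧ (r' R ≤ r R / R → 0 ≤ r'' R) := by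
  have hRpos := hR.1
  have hq : 0 < r' R := hr.derivPos R hR
  have hv : 0 < r R / R := div_pos (hr.pos R hR) hRpos
  set Q := r' R with hQ
  set V := r R / R with hV
  have hd : 0 < Q * V ^ (n - 1) := by positivity
  have hb : 0 < h'' (Q * V ^ (n - 1)) := hh.hpp_pos _ hd
  set b := h'' (Q * V ^ (n - 1)) with hbb
  have hid := key_identity n hn κ h' h'' hh.deriv2 r r' r'' hr hR
  have hn1 : (0:ℝ) < (n:ℝ) - 1 := by
    have : (2:ℝ) ≤ (n:ℝ) := by exact_mod_cast hn
    linarith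
  have hApos : 0 < R * (κ * ((n:ℝ) - 1) * Q ^ (n - 2) + V ^ (2 * n - 2) * b) := by
    apply mul_pos hRpos
    have t1 : 0 < κ * ((n:ℝ) - 1) * Q ^ (n - 2) := by positivity
    have t2 : 0 < V ^ (2 * n - 2) * b := by positivity
    linarith
  constructor
  · intro hlt
    have hpow : V ^ (n - 1) < Q ^ (n - 1) := by
      exact pow_lt_pow_left₀ hlt hv.le (by omega)
    have hRHS : ((n:ℝ) - 1) * (κ * (V ^ (n - 1) - Q ^ (n - 1))
        + (V - Q) * Q * V ^ (2 * n - 3) * b) < 0 := by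
      apply mul_neg_of_pos_of_neg hn1
      have t1 : κ * (V ^ (n - 1) - Q ^ (n - 1)) < 0 :=
        mul_neg_of_pos_of_neg hκ (by linarith)
      have t2 : (V - Q) * Q * V ^ (2 * n - 3) * b < 0 := by
        have hp : 0 < Q * (V ^ (2 * n - 3) * b) := by positivity
        have : (V - Q) * Q * V ^ (2 * n - 3) * b
            = (V - Q) * (Q * (V ^ (2 * n - 3) * b)) := by ring
        rw [this]
        exact mul_neg_of_neg_of_pos (by linarith) hp
      linarith
    by_contra hcon
    push_neg at hcon
    have := mul_nonneg hApos.le hcon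
    linarith
  · intro hle
    have hpow : V ^ (n - 1) ≥ Q ^ (n - 1) := pow_le_pow_left₀ hq.le hle (n - 1)
    have hRHS : 0 ≤ ((n:ℝ) - 1) * (κ * (V ^ (n - 1) - Q ^ (n - 1))
        + (V - Q) * Q * V ^ (2 * n - 3) * b) := by
      apply mul_nonneg hn1.le
      have t1 : 0 ≤ κ * (V ^ (n - 1) - Q ^ (n - 1)) :=
        mul_nonneg hκ.le (by linarith)
      have t2 : 0 ≤ (V - Q) * Q * V ^ (2 * n - 3) * b := by
        have hp : 0 ≤ Q * (V ^ (2 * n - 3) * b) := by positivity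
        have : (V - Q) * Q * V ^ (2 * n - 3) * b
            = (V - Q) * (Q * (V ^ (2 * n - 3) * b)) := by ring
        rw [this]
        exact mul_nonneg (by linarith) hp
      linarith
    by_contra hcon
    push_neg at hcon
    have := mul_neg_of_pos_of_neg hApos hcon
    linarith

lemma no_cross (n : ℕ) (hn : 2 ≤ n) (κ : ℝ) (hκ : 0 < κ)
    (h h' h'' : ℝ → ℝ) (hh : GoodH h h' h'')
    (r r' r'' : ℝ → ℝ) (hr : RadialSol n κ h' r r' r'')
    (hcont : ContinuousOn r (Set.Icc 0 1)) (hcav : 0 < r 0)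
    (M : ℝ) (hM : ∀ R ∈ Set.Ioc (0:ℝ) 1, del n r r' R ≤ M) :
    ∀ R ∈ Set.Ioc (0:ℝ) 1, r' R ≤ r R / R := by
  by_contra hc
  push_neg at hc
  obtain ⟨R₀, hR₀, hlt⟩ := hc
  obtain ⟨ε, hε, hεlt⟩ := near_zero n hn κ h' r r' r'' hr hcont hcav M hM
  have hrcont : ContinuousOn r (Set.Ioc 0 1) := fun x hx =>
    (hr.hasDeriv x hx).differentiableWithinAt.continuousWithinAt
  have hr'cont : ContinuousOn r' (Set.Ioc 0 1) := fun x hx =>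
    (hr.hasDeriv2 x hx).differentiableWithinAt.continuousWithinAt
  have hwcont : ContinuousOn (fun s => r' s - r s / s) (Set.Ioc 0 1) :=
    hr'cont.sub (hrcont.div continuousOn_id (fun x hx => ne_of_gt hx.1))
  set A := {x : ℝ | x ∈ Set.Ioc (0:ℝ) R₀ ∧ r' x ≤ r x / x} with hA
  set ε' := min ε R₀ with hε'
  have hε'pos : 0 < ε' := lt_min hε.1 hR₀.1
  have hε'A : ε' ∈ A := ⟨⟨hε'pos, min_le_right _ _⟩,
    le_of_lt (hεlt ε' ⟨hε'pos, min_le_left _ _⟩)⟩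
  have hAne : A.Nonempty := ⟨ε', hε'A⟩
  have hAbdd : BddAbove A := ⟨R₀, fun x hx => hx.1.2⟩
  set R₁ := sSup A with hR₁
  have hR₁le : R₁ ≤ R₀ := csSup_le hAne (fun x hx => hx.1.2)
  have hR₁ge : ε' ≤ R₁ := le_csSup hAbdd hε'A
  have hR₁pos : 0 < R₁ := lt_of_lt_of_le hε'pos hR₁ge
  have hR₁mem : R₁ ∈ Set.Ioc (0:ℝ) 1 := ⟨hR₁pos, hR₁le.trans hR₀.2⟩
  have hsub : ∀ x, R₁ < x → x ≤ R₀ → r x / x < r' x := by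
    intro x h1 h2
    by_contra hcon
    push_neg at hcon
    exact absurd (le_csSup hAbdd ⟨⟨hR₁pos.trans h1, h2⟩, hcon⟩) (not_le.mpr h1)
  have hw : ContinuousWithinAt (fun s => r' s - r s / s) (Set.Ioc 0 1) R₁ :=
    hwcont R₁ hR₁mem
  have heq : r' R₁ = r R₁ / R₁ := by
    rcases lt_trichotomy (r' R₁) (r R₁ / R₁) with hlt1 | heq1 | hgt1
    · -- r' R₁ < r R₁ / R₁ : points just right of R₁ are in A, contradiction
      have hR₁ltR₀ : R₁ < R₀ := by
        rcases lt_or_eq_of_le hR₁le with h | h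
        · exact h
        · exfalso; rw [h] at hlt1; linarith
      have hev : ∀ᶠ x in 𝓝[Set.Ioc 0 1] R₁, (fun s => r' s - r s / s) x < 0 :=
        hw.eventually_lt_const (by simpa using sub_neg.mpr hlt1)
      obtain ⟨η, hη, hbl⟩ := Metric.mem_nhdsWithin_iff.mp hev
      set x := min (R₁ + η / 2) R₀ with hx
      have hxR₁ : R₁ < x := lt_min (by linarith) hR₁ltR₀
      have hxmem : x ∈ Set.Ioc (0:ℝ) 1 :=
        ⟨hR₁pos.trans hxR₁, (min_le_right _ _).trans hR₀.2⟩
      have hxball : x ∈ Metric.ball R₁ η := by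
        rw [Metric.mem_ball, Real.dist_eq, abs_of_pos (by linarith)]
        have : x ≤ R₁ + η / 2 := min_le_left _ _
        linarith
      have hxA : x ∈ A := by
        have h5 := hbl ⟨hxball, hxmem⟩
        simp only [Set.mem_setOf_eq] at h5
        exact ⟨⟨hR₁pos.trans hxR₁, min_le_right _ _⟩, by linarith⟩
      exact absurd (le_csSup hAbdd hxA) (not_le.mpr hxR₁)
    · exact heq1
    · -- r' R₁ > r R₁ / R₁ : all of A is ≤ R₁ - η, contradiction with sSup
      exfalso
      have hev : ∀ᶠ x in 𝓝[Set.Ioc 0 1] R₁, 0 < (fun s => r' s - r s / s) x :=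
        hw.eventually_const_lt (by simpa using sub_pos.mpr hgt1)
      obtain ⟨η, hη, hbl⟩ := Metric.mem_nhdsWithin_iff.mp hev
      have hall : ∀ a ∈ A, a ≤ R₁ - η := by
        intro a ha
        by_contra hcon
        push_neg at hcon
        have haIoc : a ∈ Set.Ioc (0:ℝ) 1 := ⟨ha.1.1, ha.1.2.trans hR₀.2⟩
        have haball : a ∈ Metric.ball R₁ η := by
          rw [Metric.mem_ball, Real.dist_eq, abs_lt]
          have : a ≤ R₁ := le_csSup hAbdd ha
          constructor <;> linarith
        have := hbl ⟨haball, haIoc⟩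
        simp only [Set.mem_setOf_eq] at this
        have := ha.2
        linarith
      have := csSup_le hAne hall
      linarith
  have hR₁ltR₀ : R₁ < R₀ := by
    rcases lt_or_eq_of_le hR₁le with h | h
    · exact h
    · exfalso; rw [h] at heq; linarith
  have hIccsub : Set.Icc R₁ R₀ ⊆ Set.Ioc (0:ℝ) 1 :=
    fun x hx => ⟨hR₁pos.trans_le hx.1, hx.2.trans hR₀.2⟩
  have hanti : StrictAntiOn r' (Set.Icc R₁ R₀) := by
    apply strictAntiOn_of_deriv_neg (convex_Icc _ _) (hr'cont.mono hIccsub)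
    intro x hx
    rw [interior_Icc] at hx
    have hx1 : x ∈ Set.Ioc (0:ℝ) 1 := hIccsub ⟨hx.1.le, hx.2.le⟩
    have hnh : Set.Ioc (0:ℝ) 1 ∈ 𝓝 x := Ioc_mem_nhds hx1.1 (lt_of_lt_of_le hx.2 hR₀.2)
    rw [((hr.hasDeriv2 x hx1).hasDerivAt hnh).deriv]
    exact (rpp_sign n hn κ hκ h h' h'' hh r r' r'' hr hx1).1 (hsub x hx.1 hx.2.le)
  have hmono : StrictMonoOn (fun s => r s / s) (Set.Icc R₁ R₀) := by
    have hcV : ContinuousOn (fun s => r s / s) (Set.Icc R₁ R₀) :=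
      (hrcont.div continuousOn_id (fun x hx => ne_of_gt hx.1)).mono hIccsub
    apply strictMonoOn_of_deriv_pos (convex_Icc _ _) hcV
    intro x hx
    rw [interior_Icc] at hx
    have hx1 : x ∈ Set.Ioc (0:ℝ) 1 := hIccsub ⟨hx.1.le, hx.2.le⟩
    have hxpos : 0 < x := hx1.1
    have hnh : Set.Ioc (0:ℝ) 1 ∈ 𝓝 x := Ioc_mem_nhds hx1.1 (lt_of_lt_of_le hx.2 hR₀.2)
    have hda0 := ((hr.hasDeriv x hx1).hasDerivAt hnh).fun_div (hasDerivAt_id x) (ne_of_gt hxpos)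
    have hda : HasDerivAt (fun s => r s / s) ((r' x * x - r x * 1) / x ^ 2) x := by
      simpa using hda0
    rw [hda.deriv]
    have hvq := hsub x hx.1 hx.2.le
    apply div_pos _ (by positivity)
    have hrx : r x = (r x / x) * x := by field_simp
    simp only [id_eq, mul_one]
    nlinarith [hvq, hxpos]
  have e1 : r' R₀ < r' R₁ :=
    hanti ⟨le_refl _, hR₁ltR₀.le⟩ ⟨hR₁ltR₀.le, le_refl _⟩ hR₁ltR₀
  have e2 : r R₁ / R₁ < r R₀ / R₀ :=
    hmono ⟨le_refl _, hR₁ltR₀.le⟩ ⟨hR₁ltR₀.le, le_refl _⟩ hR₁ltR₀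
  rw [heq] at e1
  linarith


/-- a cavitating solution of the radial equilibrium equation with
bounded determinant is convex: `r''(R) ≥ 0` on `(0,1]`. -/
theorem stmt1 (n : ℕ) (hn : 2 ≤ n) (κ : ℝ) (hκ : 0 < κ)
    (h h' h'' : ℝ → ℝ) (hh : GoodH h h' h'')
    (r r' r'' : ℝ → ℝ) (hr : RadialSol n κ h' r r' r'')
    (hcont : ContinuousOn r (Set.Icc 0 1)) (hcav : 0 < r 0)
    (hbdd : ∃ M : ℝ, ∀ R ∈ Set.Ioc (0:ℝ) 1, del n r r' R ≤ M) :
    ∀ R ∈ Set.Ioc (0:ℝ) 1, 0 ≤ r'' R := by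
  obtain ⟨M, hM⟩ := hbdd
  intro R hR
  exact (rpp_sign n hn κ hκ h h' h'' hh r r' r'' hr hR).2
    (no_cross n hn κ hκ h h' h'' hh r r' r'' hr hcont hcav M hM R hR)

end
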